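/- For all integers N ≥ 1 and p ≥ 0, the 2p-th spectral moment of the Gaussian Unitary Ensemble satisfies: (1/√(2π)) · ∫_ℝ x^{2p}·e^{−x²/2} · (Σ_{k=0}^{N−1} He_k(x)²/k!) dx = Σ_{l=0}^{p} (2p)!/(2^l·l!·(p−l)!) · binom(N, p−l+1), where He_k is the probabilists' Hermite polynomial (He_0 = 1, He_1(x) = x, He_{k+1}(x) = x·He_k(x) − k·He_{k−1}(x)) and binom(N,m) := 0 for m > N. -/

import Mathlib

open Finset MeasureTheory

/-- The probabilists' Hermite polynomial `He_k`, as a function on `ℝ`: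
`He_0 = 1`, `He_1(x) = x`, `He_{k+2}(x) = x He_{k+1}(x) − (k+1) He_k(x)`. -/
noncomputable def He : ℕ → ℝ → ℝ
  | 0, _ => 1
  | 1, x => x
  | (k + 2), x => x * He (k + 1) x - (k + 1) * He k x

section GUEAux

open Polynomial Real


noncomputable def Ew (x : ℝ) : ℝ := Real.exp (-x ^ 2 / 2)

lemma Ew_pos (x : ℝ) : 0 < Ew x := Real.exp_pos _

lemma integrable_pow_Ew (n : ℕ) : Integrable (fun x : ℝ => x ^ n * Ew x) := by
  have h := integrable_rpow_mul_exp_neg_mul_sq (b := (1/2 : ℝ)) (by norm_num) (s := (n : ℝ))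
    (lt_of_lt_of_le (by norm_num) (Nat.cast_nonneg n))
  have e : (fun x : ℝ => -(1/2 : ℝ) * x ^ 2) = fun x : ℝ => -x ^ 2 / 2 := by
    funext x; ring
  rw [show (fun x : ℝ => x ^ (n:ℝ) * Real.exp (-(1/2 : ℝ) * x ^ 2))
      = fun x : ℝ => x ^ n * Ew x from funext fun x => by
        rw [Real.rpow_natCast]; unfold Ew; ring_nf] at h
  exact h

lemma integrable_poly_Ew (P : Polynomial ℝ) : Integrable (fun x : ℝ => P.eval x * Ew x) := by
  have h : ∀ x : ℝ, P.eval x * Ew x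
      = ∑ i ∈ range (P.natDegree + 1), P.coeff i * (x ^ i * Ew x) := by
    intro x
    rw [Polynomial.eval_eq_sum_range, Finset.sum_mul]
    exact Finset.sum_congr rfl fun i _ => by ring
  simp only [h]
  exact integrable_finset_sum _ fun i _ => (integrable_pow_Ew i).const_mul _

lemma hasDerivAt_Ew (x : ℝ) : HasDerivAt Ew (-x * Ew x) x := by
  have h : HasDerivAt (fun x : ℝ => -x ^ 2 / 2) (-x) x := by
    have h2 := ((hasDerivAt_pow 2 x).neg).div_const 2
    have : (fun y : ℝ => -y ^ 2 / 2) = fun y : ℝ => -(y ^ 2) / 2 := by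
      funext y; ring
    rw [this]
    exact h2.congr_deriv (by rw [show (2:ℕ) - 1 = 1 from rfl]; push_cast; ring)
  unfold Ew; simpa [mul_comm] using h.exp

/-- Integration by parts identity: `∫ (x·P(x) − P'(x)) e^{−x²/2} = 0`. -/
lemma parts (P : Polynomial ℝ) :
    ∫ x : ℝ, (x * P.eval x - (derivative P).eval x) * Ew x = 0 := by
  have hderiv : ∀ x : ℝ, HasDerivAt (fun x => P.eval x * Ew x)
      (-((x * P.eval x - (derivative P).eval x) * Ew x)) x := by
    intro x
    have := (P.hasDerivAt x).mul (hasDerivAt_Ew x)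
    exact this.congr_deriv (by ring)
  have hint : Integrable (fun x : ℝ => -((x * P.eval x - (derivative P).eval x) * Ew x)) := by
    have : ∀ x : ℝ, -((x * P.eval x - (derivative P).eval x) * Ew x)
        = ((derivative P - X * P).eval x) * Ew x := by
      intro x; simp; ring
    simp only [this]
    exact integrable_poly_Ew _
  have := integral_eq_zero_of_hasDerivAt_of_integrable hderiv hint (integrable_poly_Ew P)
  rw [integral_neg] at this
  linarith [this]

lemma integral_Ew : ∫ x : ℝ, Ew x = Real.sqrt (2 * π) := by
  have h := integral_gaussian (1/2 : ℝ)
  have e : ∀ x : ℝ, -(1/2 : ℝ) * x ^ 2 = -x ^ 2 / 2 := by intro x; ring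
  simp only [e] at h
  rw [show π / (1/2 : ℝ) = 2 * π by ring] at h
  simpa [Ew] using h



noncomputable def Hk (k : ℕ) : Polynomial ℝ := (Polynomial.hermite k).map (Int.castRingHom ℝ)

lemma Hk_zero : Hk 0 = 1 := by simp [Hk]

lemma Hk_succ (k : ℕ) : Hk (k + 1) = X * Hk k - derivative (Hk k) := by
  simp [Hk, Polynomial.hermite_succ, Polynomial.derivative_map]

lemma deriv_Hk_pair (k : ℕ) : derivative (Hk k) = C (k : ℝ) * Hk (k - 1) ∧
    derivative (Hk (k + 1)) = C ((k : ℝ) + 1) * Hk k := by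
  induction k with
  | zero =>
    constructor
    · simp [Hk_zero]
    · rw [Hk_succ, Hk_zero]; simp
  | succ k ih =>
    obtain ⟨h1, h2⟩ := ih
    refine ⟨by rw [h2]; push_cast; ring_nf, ?_⟩
    rw [Hk_succ (k + 1), derivative_sub, derivative_mul, derivative_X]
    rw [h2, derivative_mul, derivative_C, h1, Hk_succ k, h1]
    push_cast
    simp only [C_add, C_1, map_ofNat]
    ring

lemma deriv_Hk (k : ℕ) : derivative (Hk k) = C (k : ℝ) * Hk (k - 1) := (deriv_Hk_pair k).1

lemma X_mul_Hk (k : ℕ) : X * Hk k = Hk (k + 1) + C (k : ℝ) * Hk (k - 1) := by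
  rw [Hk_succ, deriv_Hk]; ring


lemma He_eval_pair (k : ℕ) (x : ℝ) :
    He k x = (Hk k).eval x ∧ He (k + 1) x = (Hk (k + 1)).eval x := by
  induction k with
  | zero =>
    refine ⟨by simp [He, Hk_zero], ?_⟩
    rw [Hk_succ, Hk_zero]; simp [He]
  | succ k ih =>
    obtain ⟨h1, h2⟩ := ih
    refine ⟨h2, ?_⟩
    show He (k + 2) x = _
    rw [Hk_succ (k + 1), (deriv_Hk_pair k).2]
    simp only [eval_sub, eval_mul, eval_X, eval_C, He]
    rw [← h1, ← h2]

lemma He_eval (k : ℕ) (x : ℝ) : He k x = (Hk k).eval x := (He_eval_pair k x).1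

/-- Normalized Gaussian integral of a polynomial. -/
noncomputable def J (Q : Polynomial ℝ) : ℝ := (Real.sqrt (2 * π))⁻¹ * ∫ x : ℝ, Q.eval x * Ew x

lemma J_add (Q R : Polynomial ℝ) : J (Q + R) = J Q + J R := by
  unfold J
  rw [← mul_add, ← integral_add (integrable_poly_Ew Q) (integrable_poly_Ew R)]
  congr 1
  apply integral_congr_ae; filter_upwards with x; simp; ring

lemma J_sub (Q R : Polynomial ℝ) : J (Q - R) = J Q - J R := by
  unfold J
  rw [← mul_sub, ← integral_sub (integrable_poly_Ew Q) (integrable_poly_Ew R)]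
  congr 1
  apply integral_congr_ae; filter_upwards with x; simp; ring

lemma J_Cmul (c : ℝ) (Q : Polynomial ℝ) : J (C c * Q) = c * J Q := by
  unfold J
  have : (∫ x : ℝ, eval x (C c * Q) * Ew x) = ∫ x : ℝ, c * (Q.eval x * Ew x) := by
    apply integral_congr_ae; filter_upwards with x; simp; ring
  rw [this, MeasureTheory.integral_const_mul]
  ring

lemma J_one : J 1 = 1 := by
  unfold J
  simp only [eval_one, one_mul]
  rw [integral_Ew, inv_mul_cancel₀]
  positivity

lemma J_zero : J 0 = 0 := by unfold J; simp

lemma J_X_mul (Q : Polynomial ℝ) : J (X * Q) = J (derivative Q) := by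
  have h := parts Q
  have : J (X * Q) - J (derivative Q) = 0 := by
    rw [← J_sub]
    unfold J
    rw [← h]
    have : (∫ x : ℝ, eval x (X * Q - derivative Q) * Ew x)
        = ∫ x : ℝ, (x * eval x Q - eval x (derivative Q)) * Ew x := by
      apply integral_congr_ae; filter_upwards with x; simp
    rw [this, h]
    ring
  linarith

lemma J_Hk (r : ℕ) : J (Hk r) = if r = 0 then 1 else 0 := by
  cases r with
  | zero => simp [Hk_zero, J_one]
  | succ r =>
    rw [Hk_succ, J_sub, J_X_mul]
    simp

lemma J_mul_Hk_succ (Q : Polynomial ℝ) (k : ℕ) :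
    J (Q * Hk (k + 1)) = J (derivative Q * Hk k) := by
  have h1 : Q * Hk (k + 1) = X * (Q * Hk k) - Q * derivative (Hk k) := by
    rw [Hk_succ]; ring
  rw [h1, J_sub, J_X_mul, derivative_mul]
  rw [J_add]
  ring

lemma J_orth (k : ℕ) : ∀ j, J (Hk j * Hk k) = if j = k then (k.factorial : ℝ) else 0 := by
  induction k with
  | zero =>
    intro j
    rw [Hk_zero, mul_one, J_Hk]
    simp
  | succ k ih =>
    intro j
    rw [J_mul_Hk_succ, deriv_Hk, mul_assoc, J_Cmul, ih]
    cases j with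
    | zero => simp
    | succ j =>
      simp only [Nat.add_sub_cancel]
      by_cases h : j = k
      · subst h; simp [Nat.factorial_succ]
      · simp [h, fun hh : j + 1 = k + 1 => h (Nat.succ_injective hh)]

noncomputable def Gg : ℕ → ℕ → ℝ
  | 0, r => if r = 0 then 1 else 0
  | (n+1), r => Gg n (r + 1) + r * Gg n (r - 1)

lemma S_rec (n j k : ℕ) : J (X ^ (n+1) * Hk j * Hk k)
    = J (X ^ n * Hk j * Hk (k + 1)) + k * J (X ^ n * Hk j * Hk (k - 1)) := by
  have h : X ^ (n+1) * Hk j * Hk k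
      = X ^ n * Hk j * Hk (k + 1) + C (k : ℝ) * (X ^ n * Hk j * Hk (k - 1)) := by
    linear_combination (X ^ n * Hk j) * X_mul_Hk k
  rw [h, J_add, J_Cmul]

lemma J_X_pow_Hk (n : ℕ) : ∀ r, J (X ^ n * Hk r) = Gg n r := by
  induction n with
  | zero =>
    intro r
    rw [pow_zero, one_mul, J_Hk]
    simp [Gg]
  | succ n ih =>
    intro r
    have h : X ^ (n+1) * Hk r
        = X ^ n * Hk (r + 1) + C (r : ℝ) * (X ^ n * Hk (r - 1)) := by
      linear_combination (X ^ n) * X_mul_Hk r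
    rw [h, J_add, J_Cmul, ih, ih]
    rfl




noncomputable def cc (j k a : ℕ) : ℝ :=
  (j.choose a : ℝ) * (k.choose a : ℝ) * (a.factorial : ℝ)

noncomputable def c1 (j k a : ℕ) : ℝ :=
  (j.choose (a+1) : ℝ) * (k.choose a : ℝ) * ((a+1).factorial : ℝ)

noncomputable def c2 (j k a : ℕ) : ℝ := ((k - a : ℕ) : ℝ) * cc j k a

lemma cc_zero_left {j a : ℕ} (h : j < a) (k : ℕ) : cc j k a = 0 := by
  simp [cc, Nat.choose_eq_zero_of_lt h]

lemma cc_zero_right {k a : ℕ} (h : k < a) (j : ℕ) : cc j k a = 0 := by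
  simp [cc, Nat.choose_eq_zero_of_lt h]

/-- Shrink a sum of `cc j k a * g a` to `range (k+1)`. -/
lemma sum_cc_ext (j k : ℕ) {M M' : ℕ} (hM : k + 1 ≤ M) (h : M ≤ M') (g : ℕ → ℝ) :
    ∑ a ∈ range M', cc j k a * g a = ∑ a ∈ range M, cc j k a * g a := by
  symm
  apply Finset.sum_subset (Finset.range_subset_range.2 h)
  intro a ha hna
  simp only [Finset.mem_range] at ha hna
  rw [cc_zero_right (by omega) j, zero_mul]

/-- TW2 coefficient identity. -/
lemma tw2 (n j K a : ℕ) :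
    cc j K a * ((j + K - 2*a : ℕ) : ℝ) * Gg n ((j + K - 2*a) - 1)
      = c1 j K a * Gg n (j + K - 1 - 2*a) + c2 j K a * Gg n (j + K - 1 - 2*a) := by
  by_cases haj : a ≤ j
  · by_cases hak : a ≤ K
    · by_cases hdeg : 2*a < j + K
      · have e1 : (j + K - 2*a) - 1 = j + K - 1 - 2*a := by omega
        rw [e1, ← add_mul]
        congr 1
        have h1 : j.choose (a+1) * (a+1) = j.choose a * (j - a) :=
          Nat.choose_succ_right_eq j a
        have key : j.choose a * K.choose a * a.factorial * (j + K - 2*a)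
            = j.choose (a+1) * K.choose a * (a+1).factorial
              + (K - a) * (j.choose a * K.choose a * a.factorial) := by
          have e2 : j + K - 2*a = (j - a) + (K - a) := by omega
          rw [e2, Nat.mul_add, Nat.factorial_succ]
          congr 1
          calc j.choose a * K.choose a * a.factorial * (j - a)
              = (j.choose a * (j - a)) * (K.choose a * a.factorial) := by ring
            _ = (j.choose (a+1) * (a+1)) * (K.choose a * a.factorial) := by rw [← h1]
            _ = j.choose (a+1) * K.choose a * ((a+1) * a.factorial) := by ring
          ring
        have hthis := congrArg (fun m : ℕ => (m : ℝ)) key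
        push_cast at hthis
        unfold c1 c2 cc
        push_cast
        linarith [hthis]
      · -- 2*a ≥ j + K, with a ≤ j, a ≤ K : forces a = j = K
        have hj' : a = j := by omega
        have hK' : a = K := by omega
        subst hj'
        subst hK'
        have e0 : a + a - 2*a = 0 := by omega
        rw [e0]
        simp [c1, c2, Nat.choose_eq_zero_of_lt (Nat.lt_succ_self a)]
    · -- a > K
      have hK : K < a := by omega
      rw [cc_zero_right hK, c2, cc_zero_right hK]
      simp [c1, Nat.choose_eq_zero_of_lt hK]
  · have hj : j < a := by omega
    rw [cc_zero_left hj, c2, cc_zero_left hj]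
    simp [c1, Nat.choose_eq_zero_of_lt (by omega : j < a + 1)]

/-- TW4 : `(k+1) * cc j k a = c2 j (k+1) a`. -/
lemma tw4 (j k a : ℕ) : ((k:ℝ)+1) * cc j k a = c2 j (k+1) a := by
  have key : (k+1) * (j.choose a * k.choose a * a.factorial)
      = (k + 1 - a) * (j.choose a * (k+1).choose a * a.factorial) := by
    have h1 : (k+1) * k.choose a = (k+1).choose (a+1) * (a+1) :=
      Nat.add_one_mul_choose_eq k a
    have h2 : (k+1).choose (a+1) * (a+1) = (k+1).choose a * (k + 1 - a) :=
      Nat.choose_succ_right_eq (k+1) a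
    calc (k+1) * (j.choose a * k.choose a * a.factorial)
        = ((k+1) * k.choose a) * (j.choose a * a.factorial) := by ring
      _ = ((k+1).choose a * (k + 1 - a)) * (j.choose a * a.factorial) := by rw [h1, h2]
      _ = (k + 1 - a) * (j.choose a * (k+1).choose a * a.factorial) := by ring
  have hthis := congrArg (fun m : ℕ => (m : ℝ)) key
  push_cast at hthis
  unfold c2 cc
  push_cast
  linarith [hthis]

lemma Gg_succ (n r : ℕ) : Gg (n+1) r = Gg n (r + 1) + r * Gg n (r - 1) := rfl

lemma S_formula (n : ℕ) : ∀ j k, J (X ^ n * Hk j * Hk k)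
    = ∑ a ∈ range (k+1), cc j k a * Gg n (j + k - 2*a) := by
  induction n with
  | zero =>
    intro j k
    rw [pow_zero, one_mul, J_orth]
    by_cases hjk : j = k
    · subst hjk
      rw [if_pos rfl, Finset.sum_eq_single_of_mem j (self_mem_range_succ j)]
      · have : j + j - 2*j = 0 := by omega
        simp [cc, Gg, this]
      · intro a ha hne
        simp only [Finset.mem_range] at ha
        have : j + j - 2*a ≠ 0 := by omega
        simp [Gg, this]
    · rw [if_neg hjk]
      symm
      apply Finset.sum_eq_zero
      intro a ha
      simp only [Finset.mem_range] at ha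
      by_cases haj : a ≤ j
      · have : j + k - 2*a ≠ 0 := by omega
        simp [Gg, this]
      · rw [cc_zero_left (by omega), zero_mul]
  | succ n ih =>
    intro j k
    rw [S_rec, ih j (k+1), ih j (k-1)]
    cases k with
    | zero =>
      have e1 : j + 1 - 2*1 = j - 1 := by omega
      simp only [Nat.cast_zero, zero_mul, add_zero, Nat.zero_sub, Nat.add_sub_cancel]
      rw [Finset.sum_range_succ, Finset.sum_range_one, Finset.sum_range_one]
      simp only [Nat.mul_zero, Nat.sub_zero, Nat.add_zero, e1, Gg_succ]
      simp [cc]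
    | succ k =>
      simp only [Nat.add_sub_cancel]
      -- RHS transformation
      have hRHS : ∑ a ∈ range (k+1+1), cc j (k+1) a * Gg (n+1) (j + (k+1) - 2*a)
          = (∑ a ∈ range (k+2), cc j (k+1) a * Gg n (j + (k+2) - 2*a))
            + ((∑ a ∈ range (k+2), c1 j (k+1) a * Gg n (j + k - 2*a))
              + (∑ a ∈ range (k+2), c2 j (k+1) a * Gg n (j + k - 2*a))) := by
        rw [← Finset.sum_add_distrib, ← Finset.sum_add_distrib]
        apply Finset.sum_congr rfl
        intro a ha
        rw [Gg_succ, mul_add]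
        congr 1
        · -- cc j (k+1) a * Gg n ((j+(k+1)-2a)+1) = cc j (k+1) a * Gg n (j+(k+2)-2a)
          by_cases h : a ≤ j ∧ a ≤ k+1
          · have : j + (k+1) - 2*a + 1 = j + (k+2) - 2*a := by omega
            rw [this]
          · rcases not_and_or.mp h with h | h
            · rw [cc_zero_left (by omega), zero_mul, zero_mul]
            · rw [cc_zero_right (by omega), zero_mul, zero_mul]
        · have := tw2 n j (k+1) a
          have e : j + (k+1) - 1 - 2*a = j + k - 2*a := by omega
          rw [e] at this
          rw [← mul_assoc]
          exact this
      rw [hRHS]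
      -- A transformation
      have hA : ∑ a ∈ range (k+1+1+1), cc j (k+1+1) a * Gg n (j + (k+1+1) - 2*a)
          = (∑ a ∈ range (k+2), cc j (k+1) a * Gg n (j + (k+2) - 2*a))
            + ∑ a ∈ range (k+2), c1 j (k+1) a * Gg n (j + k - 2*a) := by
        rw [Finset.sum_range_succ' _ (k+2)]
        have hsplit : ∀ a, cc j (k+2) (a+1) * Gg n (j + (k+2) - 2*(a+1))
            = cc j (k+1) (a+1) * Gg n (j + (k+2) - 2*(a+1))
              + c1 j (k+1) a * Gg n (j + k - 2*a) := by
          intro a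
          have hp : ((k+2).choose (a+1) : ℝ) = ((k+1).choose a : ℝ) + ((k+1).choose (a+1) : ℝ) := by
            rw [show (k+2) = (k+1)+1 from rfl, Nat.choose_succ_succ (k+1) a]
            push_cast; ring
          have hcc : cc j (k+2) (a+1)
              = c1 j (k+1) a + cc j (k+1) (a+1) := by
            unfold cc c1
            rw [hp]; ring
          rw [hcc, add_mul]
          rw [add_comm (c1 j (k+1) a * _)]
          congr 1
          -- c1 arg fix
          by_cases h : a + 1 ≤ j ∧ a ≤ k+1
          · have : j + (k+2) - 2*(a+1) = j + k - 2*a := by omega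
            rw [this]
          · rcases not_and_or.mp h with h | h
            · have : j < a + 1 := by omega
              unfold c1
              rw [Nat.choose_eq_zero_of_lt this]
              simp
            · have : k + 1 < a := by omega
              unfold c1
              rw [Nat.choose_eq_zero_of_lt this]
              simp
        calc (∑ a ∈ range (k+2), cc j (k+2) (a+1) * Gg n (j + (k+2) - 2*(a+1)))
              + cc j (k+2) 0 * Gg n (j + (k+2) - 2*0)
            = ((∑ a ∈ range (k+2), cc j (k+1) (a+1) * Gg n (j + (k+2) - 2*(a+1)))
                + cc j (k+1) 0 * Gg n (j + (k+2) - 2*0))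
              + ∑ a ∈ range (k+2), c1 j (k+1) a * Gg n (j + k - 2*a) := by
              rw [Finset.sum_congr rfl (fun a _ => hsplit a), Finset.sum_add_distrib]
              have : cc j (k+2) 0 = cc j (k+1) 0 := by unfold cc; simp
              rw [this]; ring
          _ = (∑ a ∈ range (k+2+1), cc j (k+1) a * Gg n (j + (k+2) - 2*a))
              + ∑ a ∈ range (k+2), c1 j (k+1) a * Gg n (j + k - 2*a) := by
              rw [Finset.sum_range_succ' (fun a => cc j (k+1) a * Gg n (j + (k+2) - 2*a)) (k+2)]
          _ = _ := by
              rw [sum_cc_ext j (k+1) (M := k+2) (M' := k+2+1) (le_refl (k+2)) (by omega)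
                (fun a => Gg n (j + (k+2) - 2*a))]
      rw [hA]
      -- B transformation
      have hB : ((k+1 : ℕ) : ℝ) * ∑ a ∈ range (k+1), cc j k a * Gg n (j + k - 2*a)
          = ∑ a ∈ range (k+2), c2 j (k+1) a * Gg n (j + k - 2*a) := by
        rw [Finset.mul_sum]
        have : ∀ a ∈ range (k+1), ((k+1 : ℕ) : ℝ) * (cc j k a * Gg n (j + k - 2*a))
            = c2 j (k+1) a * Gg n (j + k - 2*a) := by
          intro a _
          rw [← mul_assoc]
          congr 1
          have := tw4 j k a
          push_cast at this ⊢
          linarith [this]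
        rw [Finset.sum_congr rfl this]
        apply Finset.sum_subset
        · intro x hx
          simp only [Finset.mem_range] at hx ⊢
          omega
        intro a ha hna
        simp only [Finset.mem_range] at ha hna
        have : a = k + 1 := by omega
        subst this
        unfold c2
        simp
      rw [hB]
      ring



lemma Gg_zero_of_lt : ∀ n r, n < r → Gg n r = 0 := by
  intro n
  induction n with
  | zero => intro r hr; simp [Gg]; omega
  | succ n ih =>
    intro r hr
    show Gg n (r+1) + (r:ℝ) * Gg n (r-1) = 0
    rw [ih (r+1) (by omega), ih (r-1) (by omega)]
    ring

lemma Gg_closed : ∀ n r m, n = r + 2*m →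
    Gg n r = (n.factorial : ℝ) / ((2:ℝ)^m * m.factorial) := by
  intro n
  induction n with
  | zero =>
    intro r m h
    have hr : r = 0 := by omega
    have hm : m = 0 := by omega
    subst hr; subst hm
    simp [Gg]
  | succ n ih =>
    intro r m h
    show Gg n (r+1) + (r:ℝ) * Gg n (r-1) = _
    cases m with
    | zero =>
      have hr : r = n + 1 := by omega
      subst hr
      simp only [Nat.add_sub_cancel]
      rw [Gg_zero_of_lt n (n+2) (by omega), ih n 0 (by omega)]
      simp [Nat.factorial_succ]
    | succ m =>
      have h1 : n = (r+1) + 2*m := by omega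
      rw [ih (r+1) m h1]
      rcases Nat.eq_zero_or_pos r with hr | hr
      · subst hr
        simp only [Nat.cast_zero, zero_mul, add_zero]
        rw [Nat.factorial_succ]
        have h2 : n + 1 = 2 * (m+1) := by omega
        push_cast [pow_succ, Nat.factorial_succ]
        have hm : (m.factorial : ℝ) ≠ 0 := Nat.cast_ne_zero.mpr m.factorial_ne_zero
        have hc : (n:ℝ) + 1 = 2*((m:ℝ)+1) := by exact_mod_cast h2
        rw [hc]
        field_simp
      · have h3 : n = (r-1) + 2*(m+1) := by omega
        rw [ih (r-1) (m+1) h3]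
        have hc : (n:ℝ) + 1 = (r:ℝ) + 2*((m:ℝ)+1) := by exact_mod_cast h
        rw [Nat.factorial_succ n, Nat.factorial_succ m]
        push_cast
        have hm : (m.factorial : ℝ) ≠ 0 := Nat.cast_ne_zero.mpr m.factorial_ne_zero
        have h2 : (2:ℝ)^m ≠ 0 := by positivity
        rw [hc]
        field_simp
        ring

lemma hockey (b : ℕ) : ∀ N, ∑ k ∈ range N, (k.choose b) = N.choose (b+1) := by
  intro N
  induction N with
  | zero => simp
  | succ N ih =>
    rw [Finset.sum_range_succ, ih, Nat.choose_succ_succ]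
    simp only [Nat.succ_eq_add_one]
    omega




noncomputable def tt (p k b : ℕ) : ℝ :=
  if b ≤ p then
    (k.factorial : ℝ) * (((2*p).factorial : ℝ) /
      ((2:ℝ)^(p-b) * ((p-b).factorial : ℝ) * (b.factorial : ℝ))) * (k.choose b : ℝ)
  else 0

lemma per_k_left (p k : ℕ) :
    J (X ^ (2*p) * Hk k * Hk k) = ∑ b ∈ range (k+1), tt p k b := by
  rw [S_formula]
  rw [← Finset.sum_range_reflect (fun a => cc k k a * Gg (2*p) (k + k - 2*a)) (k+1)]
  apply Finset.sum_congr rfl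
  intro b hb
  simp only [Finset.mem_range] at hb
  have hbk : b ≤ k := by omega
  have e1 : k + 1 - 1 - b = k - b := by omega
  rw [e1]
  have e2 : k + k - 2*(k - b) = 2*b := by omega
  rw [e2]
  have e3 : k.choose (k - b) = k.choose b := Nat.choose_symm hbk
  unfold cc tt
  rw [e3]
  by_cases hbp : b ≤ p
  · rw [if_pos hbp, Gg_closed (2*p) (2*b) (p-b) (by omega)]
    have key : k.choose b * b.factorial * (k-b).factorial = k.factorial :=
      Nat.choose_mul_factorial_mul_factorial hbk
    have keyR := congrArg (fun m : ℕ => (m : ℝ)) key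
    push_cast at keyR
    have hb0 : (b.factorial : ℝ) ≠ 0 := Nat.cast_ne_zero.mpr b.factorial_ne_zero
    have h2 : ((2:ℝ)^(p-b) * ((p-b).factorial : ℝ)) ≠ 0 := by
      have hx : (0:ℝ) < ((p-b).factorial : ℝ) := by exact_mod_cast (p-b).factorial_pos
      positivity
    rw [← keyR]
    field_simp
  · rw [if_neg hbp, Gg_zero_of_lt (2*p) (2*b) (by omega), mul_zero]

lemma per_k (p k : ℕ) :
    J (X ^ (2*p) * Hk k * Hk k) = (k.factorial : ℝ) *
      ∑ l ∈ range (p+1), ((2*p).factorial : ℝ) /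
        ((2:ℝ)^l * (l.factorial : ℝ) * ((p-l).factorial : ℝ)) * (k.choose (p-l) : ℝ) := by
  rw [per_k_left, Finset.mul_sum]
  have hR : ∀ l ∈ range (p+1),
      (k.factorial : ℝ) * (((2*p).factorial : ℝ) /
        ((2:ℝ)^l * (l.factorial : ℝ) * ((p-l).factorial : ℝ)) * (k.choose (p-l) : ℝ))
      = tt p k (p - l) := by
    intro l hl
    simp only [Finset.mem_range] at hl
    unfold tt
    rw [if_pos (by omega : p - l ≤ p)]
    have e1 : p - (p - l) = l := by omega
    rw [e1]
    ring
  rw [Finset.sum_congr rfl hR]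
  rw [show (fun l => tt p k (p - l)) = fun l => tt p k (p + 1 - 1 - l) from
    funext fun l => by norm_num]
  rw [Finset.sum_range_reflect (fun b => tt p k b) (p+1)]
  -- now both sums of tt, over range (k+1) and range (p+1); extend to common range
  have ext : ∀ M, k + 1 ≤ M → p + 1 ≤ M →
      ∑ b ∈ range (k+1), tt p k b = ∑ b ∈ range (p+1), tt p k b := by
    intro M hk hp
    have l1 : ∑ b ∈ range (k+1), tt p k b = ∑ b ∈ range M, tt p k b := by
      apply Finset.sum_subset
      · intro x hx; simp only [Finset.mem_range] at hx ⊢; omega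
      · intro b hb hnb
        simp only [Finset.mem_range] at hb hnb
        unfold tt
        rw [Nat.choose_eq_zero_of_lt (by omega : k < b)]
        simp
    have l2 : ∑ b ∈ range (p+1), tt p k b = ∑ b ∈ range M, tt p k b := by
      apply Finset.sum_subset
      · intro x hx; simp only [Finset.mem_range] at hx ⊢; omega
      · intro b hb hnb
        simp only [Finset.mem_range] at hb hnb
        unfold tt
        rw [if_neg (by omega : ¬ b ≤ p)]
    rw [l1, l2]
  exact ext (k + p + 2) (by omega) (by omega)

/-- Spectral moments of the Gaussian Unitary Ensemble:
`(1/√(2π)) ∫_ℝ x^{2p} e^{−x²/2} (∑_{k<N} He_k(x)²/k!) dx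
 = ∑_{l=0}^{p} (2p)!/(2^l l! (p−l)!) binom(N, p−l+1)`. -/
theorem gue_spectral_moments (N p : ℕ) (hN : 1 ≤ N) :
    (Real.sqrt (2 * Real.pi))⁻¹ *
        ∫ x : ℝ, x ^ (2 * p) * Real.exp (-x ^ 2 / 2) *
          (∑ k ∈ Finset.range N, (He k x) ^ 2 / (k.factorial : ℝ))
      = ∑ l ∈ Finset.range (p + 1),
          ((2 * p).factorial : ℝ) / ((2 : ℝ) ^ l * (l.factorial : ℝ) * ((p - l).factorial : ℝ)) *
            (N.choose (p - l + 1) : ℝ) := by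
  have hpt : ∀ x : ℝ, x ^ (2 * p) * Real.exp (-x ^ 2 / 2) *
          (∑ k ∈ Finset.range N, (He k x) ^ 2 / (k.factorial : ℝ))
      = ∑ k ∈ Finset.range N, ((k.factorial : ℝ))⁻¹ *
          ((X ^ (2*p) * Hk k * Hk k).eval x * Ew x) := by
    intro x
    rw [Finset.mul_sum]
    apply Finset.sum_congr rfl
    intro k _
    rw [He_eval]
    simp only [eval_mul, eval_pow, eval_X]
    unfold Ew
    field_simp
  simp only [hpt]
  rw [MeasureTheory.integral_finset_sum _
    (fun k _ => ((integrable_poly_Ew (X ^ (2*p) * Hk k * Hk k)).const_mul _)), Finset.mul_sum]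
  have hJ : ∀ k ∈ Finset.range N,
      (Real.sqrt (2 * Real.pi))⁻¹ * ∫ x : ℝ, ((k.factorial : ℝ))⁻¹ *
          ((X ^ (2*p) * Hk k * Hk k).eval x * Ew x)
      = ∑ l ∈ range (p+1), ((2*p).factorial : ℝ) /
          ((2:ℝ)^l * (l.factorial : ℝ) * ((p-l).factorial : ℝ)) * (k.choose (p-l) : ℝ) := by
    intro k _
    rw [MeasureTheory.integral_const_mul]
    have : (Real.sqrt (2 * Real.pi))⁻¹ * ((k.factorial : ℝ)⁻¹ *
        ∫ x : ℝ, (X ^ (2*p) * Hk k * Hk k).eval x * Ew x)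
        = (k.factorial : ℝ)⁻¹ * J (X ^ (2*p) * Hk k * Hk k) := by
      unfold J; ring
    rw [this, per_k, ← mul_assoc, inv_mul_cancel₀ (Nat.cast_ne_zero.mpr k.factorial_ne_zero),
      one_mul]
  rw [Finset.sum_congr rfl hJ, Finset.sum_comm]
  apply Finset.sum_congr rfl
  intro l _
  rw [← Finset.mul_sum]
  congr 1
  exact_mod_cast hockey (p - l) N

end GUEAux
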